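/- Let B be a finite relational structure over a finite signature. Then the class of finite structures admitting a full homomorphism to B is finitely bounded, i.e., there exists a finite set F of finite structures such that a finite structure A admits a full homomorphism to B if and only if no member of F embeds into A. -/

import Mathlib

/-- A full homomorphism between relational structures: it preserves each relation
and its complement. -/
def FullHom {σ : Type} {ar : σ → ℕ} {A B : Type}
    (RA : ∀ s : σ, (Fin (ar s) → A) → Prop)
    (RB : ∀ s : σ, (Fin (ar s) → B) → Prop) (f : A → B) : Prop :=
  ∀ (s : σ) (t : Fin (ar s) → A), RA s t ↔ RB s (f ∘ t)

/-- A homomorphism between relational structures. -/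
def StrHom {σ : Type} {ar : σ → ℕ} {A B : Type}
    (RA : ∀ s : σ, (Fin (ar s) → A) → Prop)
    (RB : ∀ s : σ, (Fin (ar s) → B) → Prop) (f : A → B) : Prop :=
  ∀ (s : σ) (t : Fin (ar s) → A), RA s t → RB s (f ∘ t)

/-- Two elements are interchangeable if replacing one by the other in any coordinate of
any tuple preserves membership in every relation. -/
def Interchangeable {σ : Type} {ar : σ → ℕ} {A : Type}
    (RA : ∀ s : σ, (Fin (ar s) → A) → Prop) (a b : A) : Prop :=
  ∀ (s : σ) (t : Fin (ar s) → A) (i : Fin (ar s)),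
    RA s (Function.update t i a) ↔ RA s (Function.update t i b)

/-- Twins: distinct interchangeable elements. -/
def Twins {σ : Type} {ar : σ → ℕ} {A : Type}
    (RA : ∀ s : σ, (Fin (ar s) → A) → Prop) (a b : A) : Prop :=
  a ≠ b ∧ Interchangeable RA a b

/-- A structure is point-determining if it contains no twins. -/
def PointDetermining {σ : Type} {ar : σ → ℕ} {A : Type}
    (RA : ∀ s : σ, (Fin (ar s) → A) → Prop) : Prop :=
  ∀ a b : A, ¬ Twins RA a b

/-- `(C, RC)` is a blow-up of `(B, RB)`: it contains an induced copy of `B` such that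
every element outside the copy has a twin inside the copy. -/
def IsBlowUpOf {σ : Type} {ar : σ → ℕ} {C B : Type}
    (RC : ∀ s : σ, (Fin (ar s) → C) → Prop)
    (RB : ∀ s : σ, (Fin (ar s) → B) → Prop) : Prop :=
  ∃ e : B → C, Function.Injective e ∧ FullHom RB RC e ∧
    ∀ c : C, c ∉ Set.range e → ∃ b : B, Twins RC c (e b)

/-- `(F, RF)` embeds into `(A, RA)`: there is an injective full homomorphism. -/
def Embeds {σ : Type} {ar : σ → ℕ} {F A : Type}
    (RF : ∀ s : σ, (Fin (ar s) → F) → Prop)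
    (RA : ∀ s : σ, (Fin (ar s) → A) → Prop) : Prop :=
  ∃ e : F → A, Function.Injective e ∧ FullHom RF RA e


section Aux

variable {σ : Type} {ar : σ → ℕ}

theorem fullHom_comp {A B C : Type} {RA : ∀ s : σ, (Fin (ar s) → A) → Prop}
    {RB : ∀ s : σ, (Fin (ar s) → B) → Prop} {RC : ∀ s : σ, (Fin (ar s) → C) → Prop}
    {f : A → B} {g : B → C} (hf : FullHom RA RB f) (hg : FullHom RB RC g) :
    FullHom RA RC (g ∘ f) := by
  intro s t
  rw [hf s t, hg s (f ∘ t)]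
  exact Iff.rfl

theorem fullHom_interchangeable {A B : Type} {RA : ∀ s : σ, (Fin (ar s) → A) → Prop}
    {RB : ∀ s : σ, (Fin (ar s) → B) → Prop} {f : A → B} (hf : FullHom RA RB f)
    {a b : A} (hab : f a = f b) : Interchangeable RA a b := by
  intro s t i
  rw [hf s, hf s, Function.comp_update, Function.comp_update, hab]

theorem interchange_tuple {A : Type} (RA : ∀ s : σ, (Fin (ar s) → A) → Prop)
    (s : σ) (t t' : Fin (ar s) → A)
    (h : ∀ i, Interchangeable RA (t i) (t' i)) : RA s t ↔ RA s t' := by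
  have H : ∀ k : ℕ, RA s t ↔ RA s (fun i => if (i : ℕ) < k then t' i else t i) := by
    intro k
    induction k with
    | zero => simp
    | succ k ih =>
      by_cases hk : k < ar s
      · set kk : Fin (ar s) := ⟨k, hk⟩ with hkk
        set u : Fin (ar s) → A := fun i => if (i : ℕ) < k then t' i else t i with hu
        have e2 : u = Function.update u kk (t kk) := by
          funext x
          rcases eq_or_ne x kk with hx | hx
          · subst hx
            simp [Function.update_apply, hu, hkk]
          · simp [Function.update_apply, hx]
        have e1 : (fun i : Fin (ar s) => if (i : ℕ) < k + 1 then t' i else t i)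
            = Function.update u kk (t' kk) := by
          funext x
          rcases eq_or_ne x kk with hx | hx
          · subst hx
            simp [Function.update_apply, hkk]
          · have hxv : (x : ℕ) ≠ k := by
              intro hc
              exact hx (Fin.ext (by simp [hkk, hc]))
            have hiff : ((x : ℕ) < k + 1) = ((x : ℕ) < k) := by
              apply propext; omega
            simp [Function.update_apply, hx, hu, hiff]
        rw [ih, e1]
        conv_lhs => rw [e2]
        exact h kk s u kk
      · have heq : (fun i : Fin (ar s) => if (i : ℕ) < k + 1 then t' i else t i)
            = fun i : Fin (ar s) => if (i : ℕ) < k then t' i else t i := by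
          funext x
          have h1 : (x : ℕ) < ar s := x.isLt
          have hiff : ((x : ℕ) < k + 1) ↔ ((x : ℕ) < k) := by omega
          simp only [hiff]
        rw [heq]
        exact ih
  have ht' : (fun i : Fin (ar s) => if (i : ℕ) < ar s then t' i else t i) = t' := by
    funext x; simp [x.isLt]
  have hfin := H (ar s)
  rwa [ht'] at hfin

/-- The setoid of interchangeability. -/
def interSetoid {A : Type} (RA : ∀ s : σ, (Fin (ar s) → A) → Prop) : Setoid A :=
  ⟨Interchangeable RA,
    ⟨fun _ _ _ _ => Iff.rfl,
     fun h s t i => (h s t i).symm,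
     fun h1 h2 s t i => (h1 s t i).trans (h2 s t i)⟩⟩

end Aux

/-- For every finite relational structure `B` over a finite signature, the
class of finite structures admitting a full homomorphism to `B` is finitely bounded:
there is a finite set `F` of finite structures such that a finite structure `A` admits a
full homomorphism to `B` if and only if no member of `F` embeds into `A`. -/
theorem stmt_6 {σ : Type} {ar : σ → ℕ} [Fintype σ] {B : Type} [Fintype B]
    (RB : ∀ s : σ, (Fin (ar s) → B) → Prop) :
    ∃ (m : ℕ) (sz : Fin m → ℕ)
      (FR : ∀ k : Fin m, ∀ s : σ, (Fin (ar s) → Fin (sz k)) → Prop),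
      ∀ (A : Type), Fintype A → ∀ (RA : ∀ s : σ, (Fin (ar s) → A) → Prop),
        ((∃ f : A → B, FullHom RA RB f) ↔ ∀ k : Fin m, ¬ Embeds (FR k) RA) := by
  classical
  set n := Fintype.card B with hn
  set M := (Finset.univ : Finset σ).sup ar with hM
  set N := (n + 1) + (n + 1) * (n + 1) * M with hN
  -- Key extraction: any finite structure with no full hom to B contains a small
  -- induced substructure with no full hom to B.
  have key : ∀ (A : Type) (hA : Fintype A) (RA : ∀ s : σ, (Fin (ar s) → A) → Prop),
      (¬ ∃ f : A → B, FullHom RA RB f) →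
      ∃ (k : ℕ) (_ : k ≤ N) (R : ∀ s : σ, (Fin (ar s) → Fin k) → Prop),
        (¬ ∃ f : Fin k → B, FullHom R RB f) ∧ Embeds R RA := by
    intro A hA RA hnf
    haveI := hA
    -- packaging: a small Finset whose induced structure has no full hom to B suffices
    have pack : ∀ S : Finset A, S.card ≤ N →
        (¬ ∃ g : {x // x ∈ S} → B,
          FullHom (fun s (u : Fin (ar s) → {x // x ∈ S}) => RA s (fun i => (u i).1)) RB g) →
        ∃ (k : ℕ) (_ : k ≤ N) (R : ∀ s : σ, (Fin (ar s) → Fin k) → Prop),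
          (¬ ∃ f : Fin k → B, FullHom R RB f) ∧ Embeds R RA := by
      intro S hcard hnog
      set RS := fun s (u : Fin (ar s) → {x // x ∈ S}) => RA s (fun i => (u i).1) with hRS
      set e := Fintype.equivFin {x // x ∈ S} with he
      refine ⟨Fintype.card {x // x ∈ S}, by rwa [Fintype.card_coe], fun s u => RS s (e.symm ∘ u),
        ?_, ?_⟩
      · rintro ⟨f, hf⟩
        apply hnog
        refine ⟨f ∘ e, ?_⟩
        intro s t
        have h1 : e.symm ∘ (e ∘ t) = t := funext fun i => e.symm_apply_apply _
        have h2 : RS s (e.symm ∘ (e ∘ t)) ↔ RB s (f ∘ (e ∘ t)) := hf s (e ∘ t)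
        rw [h1] at h2
        exact h2
      · refine ⟨fun i => (e.symm i).1, Subtype.val_injective.comp e.symm.injective, ?_⟩
        intro s u
        exact Iff.rfl
    by_cases hr : ∃ r : Fin (n + 1) → A, ∀ i j : Fin (n + 1), i ≠ j →
        ¬ Interchangeable RA (r i) (r j)
    · -- many pairwise non-interchangeable elements: witnesses give a small bad substructure
      obtain ⟨r, hrr⟩ := hr
      have hw : ∀ i j : Fin (n + 1), i ≠ j → ∃ (s : σ) (t : Fin (ar s) → A) (idx : Fin (ar s)),
          ¬ (RA s (Function.update t idx (r i)) ↔ RA s (Function.update t idx (r j))) := by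
        intro i j hij
        have hni := hrr i j hij
        simp only [Interchangeable, not_forall] at hni
        exact hni
      choose ws wt widx hwit using hw
      set W : Finset A := Finset.image r Finset.univ ∪
        Finset.univ.biUnion (fun p : Fin (n + 1) × Fin (n + 1) =>
          if h : p.1 ≠ p.2 then Finset.image (wt p.1 p.2 h) Finset.univ else ∅) with hW
      refine pack W ?_ ?_
      · have h1 : (Finset.image r Finset.univ).card ≤ n + 1 := by
          refine le_trans Finset.card_image_le ?_
          simp
        have h2 : (Finset.univ.biUnion (fun p : Fin (n + 1) × Fin (n + 1) =>
            if h : p.1 ≠ p.2 then Finset.image (wt p.1 p.2 h) Finset.univ else ∅)).card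
            ≤ (n + 1) * (n + 1) * M := by
          refine le_trans Finset.card_biUnion_le ?_
          have hterm : ∀ p : Fin (n + 1) × Fin (n + 1),
              (if h : p.1 ≠ p.2 then Finset.image (wt p.1 p.2 h) Finset.univ else ∅).card ≤ M := by
            intro p
            split_ifs with h
            · refine le_trans Finset.card_image_le ?_
              simpa using Finset.le_sup (f := ar) (Finset.mem_univ (ws p.1 p.2 h))
            · simp
          calc ∑ p : Fin (n + 1) × Fin (n + 1),
                (if h : p.1 ≠ p.2 then Finset.image (wt p.1 p.2 h) Finset.univ else ∅).card
              ≤ ∑ _p : Fin (n + 1) × Fin (n + 1), M :=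
                Finset.sum_le_sum (fun p _ => hterm p)
            _ = (n + 1) * (n + 1) * M := by
                simp [Finset.sum_const, mul_assoc]
        calc W.card ≤ (Finset.image r Finset.univ).card +
              (Finset.univ.biUnion (fun p : Fin (n + 1) × Fin (n + 1) =>
                if h : p.1 ≠ p.2 then Finset.image (wt p.1 p.2 h) Finset.univ else ∅)).card :=
              Finset.card_union_le _ _
          _ ≤ (n + 1) + (n + 1) * (n + 1) * M := add_le_add h1 h2
          _ = N := rfl
      · rintro ⟨g, hg⟩
        have hrmem : ∀ i, r i ∈ W := fun i =>
          Finset.mem_union_left _ (Finset.mem_image_of_mem r (Finset.mem_univ i))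
        have hcard : Fintype.card B < Fintype.card (Fin (n + 1)) := by simp; exact hn.symm.le
        obtain ⟨i, j, hij, hgij⟩ :=
          Fintype.exists_ne_map_eq_of_card_lt (fun i => g ⟨r i, hrmem i⟩) hcard
        have hint := fullHom_interchangeable hg hgij
        have htmem : ∀ q, wt i j hij q ∈ W := by
          intro q
          apply Finset.mem_union_right
          apply Finset.mem_biUnion.2
          refine ⟨(i, j), Finset.mem_univ _, ?_⟩
          rw [dif_pos hij]
          exact Finset.mem_image_of_mem _ (Finset.mem_univ q)
        have key1 : ∀ (a : A) (ha : a ∈ W),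
            (fun q => ((Function.update
              (fun q => (⟨wt i j hij q, htmem q⟩ : {x // x ∈ W})) (widx i j hij) ⟨a, ha⟩) q).1)
              = Function.update (wt i j hij) (widx i j hij) a := by
          intro a ha
          funext q
          rcases eq_or_ne q (widx i j hij) with h | h
          · subst h; simp
          · simp [Function.update_apply, h]
        have this2 : RA (ws i j hij) (fun q => ((Function.update
              (fun q => (⟨wt i j hij q, htmem q⟩ : {x // x ∈ W})) (widx i j hij)
              ⟨r i, hrmem i⟩) q).1)
            ↔ RA (ws i j hij) (fun q => ((Function.update
              (fun q => (⟨wt i j hij q, htmem q⟩ : {x // x ∈ W})) (widx i j hij)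
              ⟨r j, hrmem j⟩) q).1) :=
          hint (ws i j hij) (fun q => ⟨wt i j hij q, htmem q⟩) (widx i j hij)
        rw [key1 (r i) (hrmem i), key1 (r j) (hrmem j)] at this2
        exact hwit i j hij this2
    · -- no such family: the set of representatives is small and bad
      push_neg at hr
      set rep : A → A := fun a => (Quotient.mk (interSetoid RA) a).out with hrepdef
      have hrep1 : ∀ a, Interchangeable RA (rep a) a := fun a =>
        Quotient.exact (Quotient.out_eq (Quotient.mk (interSetoid RA) a))
      have hrep2 : ∀ a b, Interchangeable RA a b → rep a = rep b := by
        intro a b hab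
        exact congrArg Quotient.out (Quotient.sound hab)
      have hrep3 : ∀ a, rep (rep a) = rep a := fun a =>
        congrArg Quotient.out (Quotient.out_eq _)
      set S : Finset A := Finset.image rep Finset.univ with hS
      have hScard : S.card ≤ n := by
        by_contra hc
        push_neg at hc
        obtain ⟨t, hts, htc⟩ := Finset.exists_subset_card_eq (s := S) (n := n + 1) hc
        have hcc : Fintype.card {x // x ∈ t} = n + 1 := by rwa [Fintype.card_coe]
        set ee := Fintype.equivFinOfCardEq hcc with hee
        set r : Fin (n + 1) → A := fun i => (ee.symm i).1 with hrdef
        have hrinj : Function.Injective r :=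
          Subtype.val_injective.comp ee.symm.injective
        obtain ⟨i, j, hij, hint⟩ := hr r
        have hriS : r i ∈ S := hts (ee.symm i).2
        have hrjS : r j ∈ S := hts (ee.symm j).2
        obtain ⟨a, _, ha⟩ := Finset.mem_image.1 hriS
        obtain ⟨b, _, hb⟩ := Finset.mem_image.1 hrjS
        have : r i = r j := by
          have h1 : rep (r i) = rep (r j) := hrep2 _ _ hint
          rw [← ha, ← hb, hrep3, hrep3] at h1
          rw [← ha, ← hb, h1]
        exact hij (hrinj this)
      refine pack S (le_trans hScard (le_trans (Nat.le_succ n) (Nat.le_add_right _ _))) ?_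
      rintro ⟨g, hg⟩
      apply hnf
      have hmem : ∀ a : A, rep a ∈ S := fun a =>
        Finset.mem_image_of_mem rep (Finset.mem_univ a)
      refine ⟨fun a => g ⟨rep a, hmem a⟩, ?_⟩
      intro s t
      have h1 : RA s t ↔ RA s (fun i => rep (t i)) :=
        interchange_tuple RA s t _ (fun i s' t' i' => (hrep1 (t i) s' t' i').symm)
      rw [h1]
      exact hg s (fun i => ⟨rep (t i), hmem (t i)⟩)
  -- the finite family of bounds
  let I := (k : Fin (N + 1)) × {R : ∀ s : σ, (Fin (ar s) → Fin (k : ℕ)) → Prop //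
      ¬ ∃ f : Fin (k : ℕ) → B, FullHom R RB f}
  haveI : Fintype I := by infer_instance
  set E := Fintype.equivFin I with hE
  refine ⟨Fintype.card I, fun j => ((E.symm j).1 : ℕ), fun j => (E.symm j).2.1, ?_⟩
  intro A hA RA
  constructor
  · rintro ⟨f, hf⟩ k ⟨e, he, hfe⟩
    exact (E.symm k).2.2 ⟨f ∘ e, fullHom_comp hfe hf⟩
  · intro hforb
    by_contra hnf
    obtain ⟨k', hk', R, hR, hEmb⟩ := key A hA RA hnf
    have hk2 : k' < N + 1 := Nat.lt_succ_of_le hk'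
    have hx : E.symm (E (⟨⟨k', hk2⟩, ⟨R, hR⟩⟩ : I)) = ⟨⟨k', hk2⟩, ⟨R, hR⟩⟩ :=
      Equiv.symm_apply_apply _ _
    have hcontra := hforb (E (⟨⟨k', hk2⟩, ⟨R, hR⟩⟩ : I))
    have hcast := congrArg (fun y : I => Embeds y.snd.1 RA) hx
    exact hcontra (Eq.mp hcast.symm hEmb)
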